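/- Fix q ∈ ℝ with 0 < q < 1 and nonzero A, δ, μ ∈ ℂ, and set z = μ + q/(Aδμ). For n ≥ 0 define H_n = (A;q)_n μⁿ · ₁φ₁(Aqⁿ; 0; q, Aδμ²). Then for every n ≥ 1, H_{n+1} − z H_n + (q/(Aδ)) (1 − Aq^{n−1}) H_{n−1} = 0, i.e. (H_n) solves the associated continuous q-Hermite recurrence; this holds for each of the two roots μ of μ² − zμ + q/(Aδ) = 0. -/

import Mathlib

open Filter

noncomputable def qp (q a : ℂ) (n : ℕ) : ℂ := ∏ j ∈ Finset.range n, (1 - a * q ^ j)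
noncomputable def qpInf (q a : ℂ) : ℂ := ∏' j : ℕ, (1 - a * q ^ j)
noncomputable def phi32 (q a b c d e w : ℂ) : ℂ :=
  ∑' k : ℕ, (qp q a k * qp q b k * qp q c k) / (qp q d k * qp q e k * qp q q k) * w ^ k
noncomputable def phi21 (q a b c w : ℂ) : ℂ :=
  ∑' k : ℕ, (qp q a k * qp q b k) / (qp q c k * qp q q k) * w ^ k
noncomputable def phi11 (q a b w : ℂ) : ℂ :=
  ∑' k : ℕ, qp q a k / (qp q b k * qp q q k) * (-1) ^ k * q ^ (k * (k - 1) / 2) * w ^ k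

noncomputable def Prec {K : Type*} [Field K] (a b2 : ℕ → K) (z : K) : ℕ → K
  | 0 => 1
  | 1 => z - a 0
  | n + 2 => (z - a (n + 1)) * Prec a b2 z (n + 1) - b2 (n + 1) * Prec a b2 z n

noncomputable def aCDH (q A B C D : ℂ) (n : ℕ) : ℂ :=
  (1 / A + 1 / B + 1 / C + 1 / D) * q ^ (n : ℤ) - (1 + q) * q ^ (2 * (n : ℤ) - 1)

noncomputable def bCDH (q A B C D : ℂ) (n : ℕ) : ℂ :=
  q / (A * B * C * D) * (1 - A * q ^ ((n : ℤ) - 1)) * (1 - B * q ^ ((n : ℤ) - 1)) *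
    (1 - C * q ^ ((n : ℤ) - 1)) * (1 - D * q ^ ((n : ℤ) - 1))

/-- `X` solves the associated continuous dual `q`-Hahn recurrence
`X_{n+1} - (z - a_n) X_n + b_n² X_{n-1} = 0` for `n ≥ 1`. -/
def SolvesCDH (q A B C D z : ℂ) (X : ℕ → ℂ) : Prop :=
  ∀ n : ℕ, 1 ≤ n →
    X (n + 1) - (z - aCDH q A B C D n) * X n + bCDH q A B C D n * X (n - 1) = 0

namespace Stmt19Aux

lemma qp_zero (q : ℂ) (k : ℕ) : qp q 0 k = 1 := by simp [qp]

lemma qp_succ (q a : ℂ) (k : ℕ) : qp q a (k + 1) = qp q a k * (1 - a * q ^ k) := by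
  simp [qp, Finset.prod_range_succ]

lemma qp_succ' (q a : ℂ) (k : ℕ) : qp q a (k + 1) = (1 - a) * qp q (a * q) k := by
  rw [qp, Finset.prod_range_succ']
  simp only [pow_zero, mul_one, qp]
  rw [mul_comm]
  congr 1
  apply Finset.prod_congr rfl
  intro j _
  ring

lemma tri_succ (k : ℕ) : (k + 1) * k / 2 = k * (k - 1) / 2 + k := by
  rcases k with _ | k
  · rfl
  · obtain ⟨r, hr⟩ := Nat.even_mul_succ_self k
    have h1 : (k + 1) * k = r + r := by rw [mul_comm]; exact hr
    have h2 : (k + 1 + 1) * (k + 1) = r + r + 2 * (k + 1) := by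
      have : (k + 1 + 1) * (k + 1) = k * (k + 1) + 2 * (k + 1) := by ring
      omega
    simp only [Nat.add_sub_cancel]
    omega

lemma one_sub_pow_ne (q : ℝ) (hq0 : 0 < q) (hq1 : q < 1) (k : ℕ) (hk : 1 ≤ k) :
    (1 : ℂ) - (q : ℂ) ^ k ≠ 0 := by
  have h : (q : ℝ) ^ k < 1 := pow_lt_one₀ hq0.le hq1 (by omega)
  intro h0
  have h2 : ((1 - q ^ k : ℝ) : ℂ) = 0 := by push_cast; exact h0
  rw [Complex.ofReal_eq_zero] at h2
  linarith

lemma qp_q_ne (q : ℝ) (hq0 : 0 < q) (hq1 : q < 1) (k : ℕ) :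
    qp (q : ℂ) (q : ℂ) k ≠ 0 := by
  apply Finset.prod_ne_zero_iff.mpr
  intro j _
  have := one_sub_pow_ne q hq0 hq1 (j + 1) (by omega)
  rw [pow_succ'] at this
  simpa using this

noncomputable def tt (q w a : ℂ) (k : ℕ) : ℂ :=
  qp q a k / qp q q k * (-1) ^ k * q ^ (k * (k - 1) / 2) * w ^ k

lemma tt_succ (q : ℝ) (hq0 : 0 < q) (hq1 : q < 1) (w a : ℂ) (k : ℕ) :
    tt q w a (k + 1) =
      tt q w a k * ((1 - a * (q:ℂ) ^ k) * (-1) * (q:ℂ) ^ k * w / (1 - (q:ℂ) ^ (k+1))) := by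
  have hqp := qp_q_ne q hq0 hq1 k
  have hne := one_sub_pow_ne q hq0 hq1 (k + 1) (by omega)
  have hqq : qp (q:ℂ) (q:ℂ) (k+1) = qp (q:ℂ) (q:ℂ) k * (1 - (q:ℂ)^(k+1)) := by
    rw [qp_succ]; ring_nf
  simp only [tt, qp_succ, hqq, Nat.add_sub_cancel, tri_succ, pow_add, pow_succ]
  field_simp

lemma summable_tt (q : ℝ) (hq0 : 0 < q) (hq1 : q < 1) (w a : ℂ) :
    Summable (tt (q:ℂ) w a) := by
  apply summable_of_ratio_norm_eventually_le (r := 1/2) (by norm_num)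
  have htend : Tendsto (fun k : ℕ => (1 + ‖a‖) * ‖w‖ / (1 - q) * q ^ k) atTop (nhds 0) := by
    simpa using (tendsto_pow_atTop_nhds_zero_of_lt_one hq0.le hq1).const_mul
      ((1 + ‖a‖) * ‖w‖ / (1 - q))
  filter_upwards [htend.eventually_le_const (by norm_num : (0:ℝ) < 1/2)] with k hk
  rw [tt_succ q hq0 hq1, norm_mul]
  have hb : ‖(1 - a * (q:ℂ) ^ k) * (-1) * (q:ℂ) ^ k * w / (1 - (q:ℂ) ^ (k+1))‖ ≤ 1/2 := by
    rw [norm_div, norm_mul, norm_mul, norm_mul]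
    have h1 : ‖(1:ℂ) - a * (q:ℂ) ^ k‖ ≤ 1 + ‖a‖ := by
      calc ‖(1:ℂ) - a * (q:ℂ) ^ k‖ ≤ ‖(1:ℂ)‖ + ‖a * (q:ℂ) ^ k‖ := norm_sub_le _ _
        _ ≤ 1 + ‖a‖ := by
            rw [norm_one, norm_mul, norm_pow, Complex.norm_real]
            have : ‖q‖ ^ k ≤ 1 := pow_le_one₀ (norm_nonneg _)
              (by rw [Real.norm_eq_abs, abs_of_pos hq0]; linarith)
            nlinarith [norm_nonneg a, pow_nonneg (norm_nonneg (q:ℂ)) k]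
    have h2 : ‖(q:ℂ) ^ k‖ = q ^ k := by
      rw [norm_pow, Complex.norm_real, Real.norm_eq_abs, abs_of_pos hq0]
    have h3 : (1 : ℝ) - q ≤ ‖(1:ℂ) - (q:ℂ) ^ (k+1)‖ := by
      have he : ((1 - q^(k+1) : ℝ) : ℂ) = 1 - (q:ℂ)^(k+1) := by push_cast; ring
      rw [← he, Complex.norm_real, Real.norm_eq_abs]
      have hlt : q ^ (k+1) ≤ q := by
        calc q ^ (k+1) ≤ q ^ 1 := pow_le_pow_of_le_one hq0.le hq1.le (by omega)
          _ = q := pow_one q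
      rw [abs_of_pos (by nlinarith [pow_pos hq0 (k+1)])]
      linarith
    have hpos : (0:ℝ) < 1 - q := by linarith
    have hden : (0:ℝ) < ‖(1:ℂ) - (q:ℂ) ^ (k+1)‖ := lt_of_lt_of_le hpos h3
    rw [norm_neg, norm_one, mul_one, div_le_iff₀ hden]
    calc ‖(1:ℂ) - a * (q:ℂ) ^ k‖ * ‖(q:ℂ) ^ k‖ * ‖w‖ ≤ (1 + ‖a‖) * q ^ k * ‖w‖ := by
          rw [h2]
          apply mul_le_mul_of_nonneg_right _ (norm_nonneg w)
          exact mul_le_mul_of_nonneg_right h1 (pow_nonneg hq0.le k)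
      _ = (1 + ‖a‖) * ‖w‖ / (1 - q) * q ^ k * (1 - q) := by field_simp
      _ ≤ 1/2 * ‖(1:ℂ) - (q:ℂ) ^ (k+1)‖ := mul_le_mul hk h3 hpos.le (by norm_num)
  calc ‖tt (q:ℂ) w a k‖ * ‖(1 - a * (q:ℂ) ^ k) * (-1) * (q:ℂ) ^ k * w / (1 - (q:ℂ) ^ (k+1))‖
      ≤ ‖tt (q:ℂ) w a k‖ * (1/2) := mul_le_mul_of_nonneg_left hb (norm_nonneg _)
    _ = 1/2 * ‖tt (q:ℂ) w a k‖ := by ring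

lemma key1 (q : ℝ) (w a : ℂ) (k : ℕ) :
    (1 - a * (q:ℂ)) * w * tt (q:ℂ) w (a*(q:ℂ)*(q:ℂ)) k
      = w * tt (q:ℂ) w (a*(q:ℂ)) k * (1 - a*(q:ℂ)*(q:ℂ)^k) := by
  have e1 : (1 - a*(q:ℂ)) * qp (q:ℂ) (a*(q:ℂ)*(q:ℂ)) k
      = qp (q:ℂ) (a*(q:ℂ)) k * (1 - a*(q:ℂ)*(q:ℂ)^k) := by
    rw [← qp_succ', qp_succ]
  calc (1 - a * (q:ℂ)) * w * tt (q:ℂ) w (a*(q:ℂ)*(q:ℂ)) k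
      = w / qp (q:ℂ) (q:ℂ) k * ((-1)^k * (q:ℂ)^(k*(k-1)/2) * w^k)
          * ((1 - a*(q:ℂ)) * qp (q:ℂ) (a*(q:ℂ)*(q:ℂ)) k) := by
        simp only [tt]; ring
    _ = w / qp (q:ℂ) (q:ℂ) k * ((-1)^k * (q:ℂ)^(k*(k-1)/2) * w^k)
          * (qp (q:ℂ) (a*(q:ℂ)) k * (1 - a*(q:ℂ)*(q:ℂ)^k)) := by rw [e1]
    _ = w * tt (q:ℂ) w (a*(q:ℂ)) k * (1 - a*(q:ℂ)*(q:ℂ)^k) := by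
        simp only [tt]; ring

lemma key2 (q : ℝ) (hq0 : 0 < q) (hq1 : q < 1) (w a : ℂ) (k : ℕ) :
    (q:ℂ) * (tt (q:ℂ) w a (k+1) - tt (q:ℂ) w (a*(q:ℂ)) (k+1))
      = a * (q:ℂ) * (q:ℂ)^k * w * tt (q:ℂ) w (a*(q:ℂ)) k := by
  have hqp := qp_q_ne q hq0 hq1 k
  have hne : (1:ℂ) - (q:ℂ) * (q:ℂ)^k ≠ 0 := by
    have := one_sub_pow_ne q hq0 hq1 (k + 1) (by omega)
    rw [pow_succ'] at this; exact this
  have e2 : qp (q:ℂ) a (k+1) = (1 - a) * qp (q:ℂ) (a*(q:ℂ)) k := qp_succ' _ _ _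
  have e3 : qp (q:ℂ) (a*(q:ℂ)) (k+1)
      = qp (q:ℂ) (a*(q:ℂ)) k * (1 - a*(q:ℂ)*(q:ℂ)^k) := qp_succ _ _ _
  have e4 : qp (q:ℂ) (q:ℂ) (k+1) = qp (q:ℂ) (q:ℂ) k * (1 - (q:ℂ)*(q:ℂ)^k) :=
    qp_succ _ _ _
  simp only [tt, e2, e3, e4, Nat.add_sub_cancel, tri_succ, pow_add, pow_succ]
  field_simp
  ring

lemma key (q : ℝ) (hq0 : 0 < q) (hq1 : q < 1) (w a : ℂ) :
    (1 - a * (q:ℂ)) * w * (∑' k, tt (q:ℂ) w (a*(q:ℂ)*(q:ℂ)) k)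
      - (w + (q:ℂ)) * (∑' k, tt (q:ℂ) w (a*(q:ℂ)) k)
      + (q:ℂ) * (∑' k, tt (q:ℂ) w a k) = 0 := by
  have s1 := summable_tt q hq0 hq1 w a
  have s2 := summable_tt q hq0 hq1 w (a*(q:ℂ))
  have s3 := summable_tt q hq0 hq1 w (a*(q:ℂ)*(q:ℂ))
  set G : ℕ → ℂ := fun k => (q:ℂ) * (tt (q:ℂ) w a k - tt (q:ℂ) w (a*(q:ℂ)) k) with hGdef
  have hG : Summable G := ((s1.sub s2).mul_left _)
  have hG0 : G 0 = 0 := by simp [hGdef, tt, qp]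
  have hFG : ∀ k, (1 - a * (q:ℂ)) * w * tt (q:ℂ) w (a*(q:ℂ)*(q:ℂ)) k
      - w * tt (q:ℂ) w (a*(q:ℂ)) k = -(G (k+1)) := by
    intro k
    rw [key1 q w a k]
    have := key2 q hq0 hq1 w a k
    simp only [hGdef]
    rw [this]
    ring
  have hFsum : (∑' k, ((1 - a * (q:ℂ)) * w * tt (q:ℂ) w (a*(q:ℂ)*(q:ℂ)) k
      - w * tt (q:ℂ) w (a*(q:ℂ)) k)) = -(∑' k, G k) := by
    calc (∑' k, ((1 - a * (q:ℂ)) * w * tt (q:ℂ) w (a*(q:ℂ)*(q:ℂ)) k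
        - w * tt (q:ℂ) w (a*(q:ℂ)) k)) = ∑' k, -(G (k+1)) := tsum_congr hFG
      _ = -(∑' k, G (k+1)) := by rw [tsum_neg]
      _ = -(∑' k, G k) := by
          rw [Summable.tsum_eq_zero_add hG, hG0, zero_add]
  have hFsum' : (∑' k, ((1 - a * (q:ℂ)) * w * tt (q:ℂ) w (a*(q:ℂ)*(q:ℂ)) k
      - w * tt (q:ℂ) w (a*(q:ℂ)) k))
      = (1 - a * (q:ℂ)) * w * (∑' k, tt (q:ℂ) w (a*(q:ℂ)*(q:ℂ)) k)
        - w * (∑' k, tt (q:ℂ) w (a*(q:ℂ)) k) := by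
    rw [Summable.tsum_sub (s3.mul_left _) (s2.mul_left _), tsum_mul_left, tsum_mul_left]
  have hGsum : (∑' k, G k) = (q:ℂ) * ((∑' k, tt (q:ℂ) w a k)
      - (∑' k, tt (q:ℂ) w (a*(q:ℂ)) k)) := by
    simp only [hGdef]
    rw [tsum_mul_left, Summable.tsum_sub s1 s2]
  have := hFsum'.symm.trans hFsum
  rw [hGsum] at this
  linear_combination this

end Stmt19Aux

open Stmt19Aux in
/-- The functions `H_n^{(1)}` of (6.32) solve the associated continuous q-Hermite
recurrence (6.31); this holds for each of the two roots `μ` of `μ² - zμ + q/(Aδ) = 0`. -/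
theorem stmt19 (q : ℝ) (hq0 : 0 < q) (hq1 : q < 1)
    (A δ μ : ℂ) (hA : A ≠ 0) (hδ : δ ≠ 0) (hμ : μ ≠ 0)
    (z : ℂ) (hz : z = μ + (q : ℂ) / (A * δ * μ))
    (H : ℕ → ℂ)
    (hH : ∀ n : ℕ, H n =
      qp q A n * μ ^ n * phi11 q (A * (q : ℂ) ^ n) 0 (A * δ * μ ^ 2)) :
    ∀ n : ℕ, 1 ≤ n →
      H (n + 1) - z * H n +
        (q : ℂ) / (A * δ) * (1 - A * (q : ℂ) ^ ((n : ℤ) - 1)) * H (n - 1) = 0 := by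
  have hphi : ∀ x : ℂ, phi11 (q:ℂ) x 0 (A*δ*μ^2) = ∑' k, tt (q:ℂ) (A*δ*μ^2) x k := by
    intro x
    unfold phi11 tt
    apply tsum_congr
    intro k
    rw [qp_zero, one_mul]
  intro n hn
  obtain ⟨m, rfl⟩ : ∃ m, n = m + 1 := ⟨n - 1, by omega⟩
  have hzp : (q:ℂ) ^ (((m+1 : ℕ) : ℤ) - 1) = (q:ℂ) ^ m := by
    have h : (((m+1 : ℕ)) : ℤ) - 1 = ((m : ℕ) : ℤ) := by push_cast; ring
    rw [h, zpow_natCast]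
  have hsub : (m + 1) - 1 = m := rfl
  rw [hsub, hzp, hH m, hH (m+1), hH (m+1+1)]
  have c2 : A * (q:ℂ)^(m+1+1) = (A*(q:ℂ)^m)*(q:ℂ)*(q:ℂ) := by ring
  have c1 : A * (q:ℂ)^(m+1) = (A*(q:ℂ)^m)*(q:ℂ) := by ring
  rw [c1, c2, hphi, hphi, hphi]
  have hkey := key q hq0 hq1 (A*δ*μ^2) (A*(q:ℂ)^m)
  set T3 := ∑' k, tt (q:ℂ) (A*δ*μ^2) (A*(q:ℂ)^m*(q:ℂ)*(q:ℂ)) k with hT3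
  set T2 := ∑' k, tt (q:ℂ) (A*δ*μ^2) (A*(q:ℂ)^m*(q:ℂ)) k with hT2
  set T1 := ∑' k, tt (q:ℂ) (A*δ*μ^2) (A*(q:ℂ)^m) k with hT1
  have hb : (1 - A*(q:ℂ)^m*(q:ℂ)) * μ^2 * T3 - z * μ * T2 + (q:ℂ)/(A*δ) * T1 = 0 := by
    rw [hz]
    field_simp
    linear_combination hkey
  simp only [qp_succ]
  linear_combination (qp (q:ℂ) A m * (1 - A*(q:ℂ)^m) * μ^m) * hb
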